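/- Let V be a real vector space of dimension 2n, let P : V* → V be a skew-symmetric bijective linear map, let P' : V* → V be skew-symmetric, and set N* = P^{-1} ∘ P' : V* → V*. Let α_1, …, α_n ∈ V* be linearly independent covectors which are pairwise in involution with respect to P, i.e. ⟨α_i, P α_j⟩ = 0 for all i, j. Then the subspace D* = span{α_1, …, α_n} is invariant under N* if and only if ⟨α_i, P' α_j⟩ = 0 for all i, j = 1, …, n. (This is the pointwise content of Theorem 3.2: an integrable system {H_1, …, H_n} on a regular bihamiltonian manifold is separable in Darboux–Nijenhuis coordinates if and only if, along with {H_i, H_j} = 0, also {H_i, H_j}' = 0 — the Liouville foliation is bilagrangian.) -/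
import Mathlib


/-- pointwise Theorem 3.2, bilagrangian condition: on a `2n`-dimensional
space with `P` skew-symmetric bijective and `P'` skew-symmetric, if `α_1, …, α_n` are
linearly independent covectors with `⟨α_i, Pα_j⟩ = 0` for all `i, j`, then their span is
invariant under `N* = P⁻¹ ∘ P'` (characterized by `P(N*α) = P'α`) if and only if also
`⟨α_i, P'α_j⟩ = 0` for all `i, j`. -/
theorem stmt_11 (V : Type*) [AddCommGroup V] [Module ℝ V] [FiniteDimensional ℝ V]
    (n : ℕ) (hdim : Module.finrank ℝ V = 2 * n)
    (P P' : Module.Dual ℝ V →ₗ[ℝ] V)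
    (hP : ∀ α β : Module.Dual ℝ V, α (P β) = -(β (P α)))
    (hP' : ∀ α β : Module.Dual ℝ V, α (P' β) = -(β (P' α)))
    (hPbij : Function.Bijective P)
    (Nstar : Module.Dual ℝ V →ₗ[ℝ] Module.Dual ℝ V)
    (hNstar : ∀ α : Module.Dual ℝ V, P (Nstar α) = P' α)
    (α : Fin n → Module.Dual ℝ V) (hind : LinearIndependent ℝ α)
    (hinv : ∀ i j : Fin n, (α i) (P (α j)) = 0) :
    Submodule.map Nstar (Submodule.span ℝ (Set.range α)) ≤ Submodule.span ℝ (Set.range α)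
      ↔ ∀ i j : Fin n, (α i) (P' (α j)) = 0 := by
  classical
  set D : Submodule ℝ (Module.Dual ℝ V) := Submodule.span ℝ (Set.range α) with hD
  -- the image family P ∘ α is linearly independent
  have hindP : LinearIndependent ℝ (fun i => P (α i)) := by
    have := hind.map' P (LinearMap.ker_eq_bot.mpr hPbij.injective)
    exact this
  set A : Submodule ℝ V := Submodule.span ℝ (Set.range fun i => P (α i)) with hA
  -- membership in the dual annihilator of A
  have hmemAnn : ∀ β : Module.Dual ℝ V,
      β ∈ A.dualAnnihilator ↔ ∀ i, β (P (α i)) = 0 := by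
    intro β
    rw [Submodule.mem_dualAnnihilator]
    constructor
    · intro h i
      exact h _ (Submodule.subset_span ⟨i, rfl⟩)
    · intro h w hw
      have : Set.range (fun i => P (α i)) ⊆ (LinearMap.ker β : Set V) := by
        rintro _ ⟨i, rfl⟩
        exact h i
      have hs : A ≤ LinearMap.ker β := Submodule.span_le.mpr this
      exact hs hw
  -- D ≤ A.dualAnnihilator
  have hDle : D ≤ A.dualAnnihilator := by
    rw [hD, Submodule.span_le]
    rintro _ ⟨i, rfl⟩
    exact (hmemAnn _).mpr fun j => hinv i j
  -- ranks
  have hrD : Module.finrank ℝ D = n := by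
    rw [hD, finrank_span_eq_card hind, Fintype.card_fin]
  have hrA : Module.finrank ℝ A = n := by
    rw [hA, finrank_span_eq_card hindP, Fintype.card_fin]
  have hrAnn : Module.finrank ℝ A.dualAnnihilator = n := by
    have h1 : Module.finrank ℝ (V ⧸ A) = Module.finrank ℝ A.dualAnnihilator :=
      (Subspace.quotEquivAnnihilator A).finrank_eq
    have h2 := Submodule.finrank_quotient_add_finrank A
    omega
  -- hence equality
  have hDeq : D = A.dualAnnihilator :=
    Submodule.eq_of_le_of_finrank_le hDle (by rw [hrD, hrAnn])
  constructor
  · intro hmap i j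
    have hNj : Nstar (α j) ∈ D :=
      hmap ⟨α j, Submodule.subset_span ⟨j, rfl⟩, rfl⟩
    have : (Nstar (α j)) (P (α i)) = 0 := by
      rw [hDeq] at hNj
      exact (hmemAnn _).mp hNj i
    calc (α i) (P' (α j)) = (α i) (P (Nstar (α j))) := by rw [hNstar]
      _ = -((Nstar (α j)) (P (α i))) := hP _ _
      _ = 0 := by rw [this, neg_zero]
  · intro h0
    rw [Submodule.map_span, Submodule.span_le]
    rintro _ ⟨_, ⟨i, rfl⟩, rfl⟩
    rw [SetLike.mem_coe, hDeq, hmemAnn]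
    intro j
    have : (α j) (P (Nstar (α i))) = 0 := by rw [hNstar]; exact h0 j i
    have h2 := hP (α j) (Nstar (α i))
    rw [this] at h2
    linarith
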